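/- Let n₁, n₂, l₁, l₂ > 0 with n₁ ≠ n₂, A = (n₁/n₂ + n₂/n₁)/2 + 1, B = (n₁/n₂ + n₂/n₁)/2 − 1, a = n₁l₁ + n₂l₂, b = n₁l₁ − n₂l₂, f(ν) = A cos(aν) − B cos(bν). Assume b ≠ 0 and a/b is irrational. Then A + B = n₁/n₂ + n₂/n₁ > 2, and for every M > 0 there exist ν₁ > M and ν₂ > M such that f(ν₁) ≥ (A + B + 2)/2 > 2 and f(ν₂) ≤ −(A + B + 2)/2 < −2. In particular the function f(ν) = trace M(ν) of the two-layer periodic optical medium exceeds 2 in absolute value for arbitrarily large frequencies, so the medium has infinitely many spectral gaps. -/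

import Mathlib

open Real

lemma dense_aux {c : ℝ} (hc : Irrational c) :
    Dense ((AddSubgroup.closure {c, 1} : AddSubgroup ℝ) : Set ℝ) := by
  rcases (AddSubgroup.closure ({c, 1} : Set ℝ)).dense_or_cyclic with h | ⟨r, hr⟩
  · exact h
  · exfalso
    have hcmem : c ∈ AddSubgroup.closure ({c, 1} : Set ℝ) :=
      AddSubgroup.subset_closure (by simp)
    have h1mem : (1 : ℝ) ∈ AddSubgroup.closure ({c, 1} : Set ℝ) :=
      AddSubgroup.subset_closure (by simp)
    rw [hr, AddSubgroup.mem_closure_singleton] at hcmem h1mem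
    obtain ⟨p, hp⟩ := hcmem
    obtain ⟨q, hq⟩ := h1mem
    rw [zsmul_eq_mul] at hp hq
    have hq0 : q ≠ 0 := by
      rintro rfl; simp at hq
    refine hc ⟨(p / q : ℚ), ?_⟩
    push_cast
    rw [div_eq_iff (by exact_mod_cast hq0)]
    calc (p : ℝ) = p * (q * r) := by rw [hq]; ring
    _ = c * q := by rw [← hp]; ring

lemma small_aux {c : ℝ} (hc : Irrational c) {δ : ℝ} (hδ : 0 < δ) :
    ∃ m k : ℤ, m ≠ 0 ∧ |c * m + k| < δ := by
  have hd := dense_aux hc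
  have := hd (c / 2)
  rw [Metric.mem_closure_iff] at this
  obtain ⟨s, hsS, hs⟩ := this (δ / 2) (by linarith)
  rw [SetLike.mem_coe, AddSubgroup.mem_closure_pair] at hsS
  obtain ⟨m, n, hmn⟩ := hsS
  rw [zsmul_eq_mul, zsmul_eq_mul, mul_one] at hmn
  refine ⟨2 * m - 1, 2 * n, by omega, ?_⟩
  have : |c / 2 - s| < δ / 2 := by rwa [Real.dist_eq] at hs
  rw [← hmn] at this
  push_cast
  have heq : c * (2 * (m:ℝ) - 1) + 2 * n = 2 * ((m * c + n) - c / 2) := by ring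
  rw [heq, abs_mul, abs_two, abs_sub_comm]
  linarith

lemma approx_aux {c : ℝ} (hc : Irrational c) (t : ℝ) {δ : ℝ} (hδ : 0 < δ) (N : ℕ) :
    ∃ m k : ℤ, (N : ℝ) < |(m : ℝ)| ∧ |c * m + k - t| < δ := by
  set δ₁ : ℝ := δ / (N + 2) with hδ₁def
  have hδ₁ : 0 < δ₁ := by positivity
  obtain ⟨m₀, k₀, hm₀, he⟩ := small_aux hc hδ₁
  set e : ℝ := c * m₀ + k₀ with hedef
  have he0 : e ≠ 0 := by
    intro h
    apply hc
    refine ⟨(-k₀ / m₀ : ℚ), ?_⟩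
    push_cast
    rw [div_eq_iff (by exact_mod_cast hm₀)]
    have : c * m₀ = -k₀ := by linarith [h]
    linarith [this]
  set q₀ : ℤ := round (t / e) with hq₀def
  set q : ℤ := if 0 ≤ q₀ then q₀ + (N + 1) else q₀ - (N + 1) with hqdef
  have hqabs : (N : ℤ) + 1 ≤ |q| := by
    rw [hqdef]
    split_ifs with h
    · rw [abs_of_nonneg (by omega)]; omega
    · rw [abs_of_nonpos (by omega)]; omega
  have hround : |(q₀ : ℝ) * e - t| ≤ |e| / 2 := by
    have h1 : |t / e - q₀| ≤ 1 / 2 := abs_sub_round (t / e)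
    have h2 : (q₀ : ℝ) * e - t = -(e * (t / e - q₀)) := by
      field_simp
      ring
    rw [h2, abs_neg, abs_mul]
    calc |e| * |t / e - (q₀:ℝ)| ≤ |e| * (1/2) := by
          apply mul_le_mul_of_nonneg_left h1 (abs_nonneg e)
    _ = |e| / 2 := by ring
  have hqq : |(q : ℝ) - q₀| ≤ N + 1 := by
    rw [hqdef]
    have heq : |q - q₀| = ((N:ℤ) + 1) := by
      rcases le_or_gt 0 q₀ with h | h
      · rw [hqdef, if_pos h, show q₀ + ((N:ℤ)+1) - q₀ = (N:ℤ)+1 by ring]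
        exact abs_of_nonneg (by positivity)
      · rw [hqdef, if_neg (not_le.mpr h), show q₀ - ((N:ℤ)+1) - q₀ = -((N:ℤ)+1) by ring,
          abs_neg]
        exact abs_of_nonneg (by positivity)
    rw [show ((q:ℝ) - q₀) = ((q - q₀ : ℤ) : ℝ) by push_cast; ring, ← Int.cast_abs, heq]
    push_cast
    exact le_rfl
  refine ⟨q * m₀, q * k₀, ?_, ?_⟩
  · push_cast
    rw [abs_mul]
    have h1 : (1 : ℝ) ≤ |(m₀ : ℝ)| := by
      rw [← Int.cast_abs]; exact_mod_cast Int.one_le_abs hm₀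
    have h2 : (N : ℝ) + 1 ≤ |(q : ℝ)| := by
      rw [← Int.cast_abs]; exact_mod_cast hqabs
    nlinarith [abs_nonneg ((q : ℝ))]
  · have key : c * ((q : ℝ) * m₀) + (q : ℝ) * k₀ = (q : ℝ) * e := by
      rw [hedef]; ring
    push_cast
    rw [key]
    have h3 : (q : ℝ) * e - t = ((q₀ : ℝ) * e - t) + ((q : ℝ) - q₀) * e := by ring
    rw [h3]
    calc |((q₀ : ℝ) * e - t) + ((q : ℝ) - q₀) * e|
        ≤ |(q₀ : ℝ) * e - t| + |((q : ℝ) - q₀)| * |e| := by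
          refine (abs_add_le _ _).trans ?_; rw [abs_mul]
    _ ≤ |e| / 2 + (N + 1) * |e| := by
          refine add_le_add hround ?_
          exact mul_le_mul_of_nonneg_right hqq (abs_nonneg e)
    _ < δ₁ / 2 + (N + 1) * δ₁ := by
          have : (0:ℝ) < N + 1 := by positivity
          nlinarith [abs_nonneg e]
    _ ≤ δ := by
          have hkey : δ₁ * (N + 2) = δ := by
            rw [hδ₁def]; field_simp
          nlinarith [hδ₁.le]

lemma cos2pi_aux {A : ℝ} (hA2 : 2 < A) :
    ∃ δ : ℝ, 0 < δ ∧ ∀ u : ℝ, |u| < δ → 2 / A < Real.cos (2 * π * u) := by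
  have hπ := Real.pi_pos
  have hA0 : 0 < A := by linarith
  have hη : 0 < 1 - 2 / A := by
    have h1 : 2 / A < 1 := (div_lt_one hA0).mpr (by linarith)
    linarith
  refine ⟨Real.sqrt (2 * (1 - 2 / A)) / (2 * π), by positivity, fun u hu => ?_⟩
  have habs : |2 * π * u| < Real.sqrt (2 * (1 - 2 / A)) := by
    rw [abs_mul, abs_of_nonneg (by positivity : (0:ℝ) ≤ 2 * π)]
    calc 2 * π * |u| < 2 * π * (Real.sqrt (2 * (1 - 2 / A)) / (2 * π)) :=
          mul_lt_mul_of_pos_left hu (by positivity)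
    _ = Real.sqrt (2 * (1 - 2 / A)) := by field_simp
  have hsq : (2 * π * u) ^ 2 < 2 * (1 - 2 / A) := by
    have h1 := Real.sq_sqrt (show (0:ℝ) ≤ 2 * (1 - 2 / A) by linarith)
    nlinarith [abs_nonneg (2 * π * u), sq_abs (2 * π * u),
      Real.sqrt_nonneg (2 * (1 - 2 / A))]
  have h2 := Real.one_sub_sq_div_two_le_cos (x := 2 * π * u)
  linarith

theorem stmt_1 (n₁ n₂ l₁ l₂ : ℝ) (hn₁ : 0 < n₁) (hn₂ : 0 < n₂)
    (hl₁ : 0 < l₁) (hl₂ : 0 < l₂) (hne : n₁ ≠ n₂)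
    (A B a b : ℝ)
    (hA : A = (n₁ / n₂ + n₂ / n₁) / 2 + 1)
    (hB : B = (n₁ / n₂ + n₂ / n₁) / 2 - 1)
    (ha : a = n₁ * l₁ + n₂ * l₂)
    (hb : b = n₁ * l₁ - n₂ * l₂)
    (hb0 : b ≠ 0) (hirr : Irrational (a / b))
    (f : ℝ → ℝ) (hf : ∀ ν, f ν = A * Real.cos (a * ν) - B * Real.cos (b * ν)) :
    (A + B = n₁ / n₂ + n₂ / n₁ ∧ n₁ / n₂ + n₂ / n₁ > 2) ∧
    ∀ M > 0, (∃ ν₁ > M, f ν₁ ≥ (A + B + 2) / 2 ∧ (A + B + 2) / 2 > 2) ∧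
             (∃ ν₂ > M, f ν₂ ≤ -((A + B + 2) / 2) ∧ -((A + B + 2) / 2) < -2) := by
  have hπ := Real.pi_pos
  have hABsum : A + B = n₁ / n₂ + n₂ / n₁ := by rw [hA, hB]; ring
  have hAB2 : 2 < n₁ / n₂ + n₂ / n₁ := by
    rw [div_add_div _ _ hn₂.ne' hn₁.ne', lt_div_iff₀ (by positivity)]
    have hd : n₁ - n₂ ≠ 0 := sub_ne_zero.mpr hne
    have hsq : 0 < (n₁ - n₂) ^ 2 := lt_of_le_of_ne (sq_nonneg _) (Ne.symm (pow_ne_zero 2 hd))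
    nlinarith
  have hA2 : 2 < A := by rw [hA]; linarith
  have hA0 : 0 < A := by linarith
  have hAeqB : A = B + 2 := by rw [hA, hB]; ring
  have hhalf : (A + B + 2) / 2 = B + 2 := by rw [hAeqB]; ring
  have hhalf2 : (2:ℝ) < (A + B + 2) / 2 := by rw [hABsum]; linarith
  have hAdiv : A * (2 / A) = 2 := by field_simp
  have hhalf2' : -((A + B + 2) / 2) < -2 := by rw [hABsum]; linarith
  obtain ⟨δ', hδ'pos, cosb⟩ := cos2pi_aux hA2
  refine ⟨⟨hABsum, hAB2⟩, ?_⟩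
  intro M hM
  obtain ⟨N, hNb⟩ : ∃ N : ℕ, M * |b| < (N:ℝ) * π := by
    refine ⟨⌈M * |b| / π⌉₊ + 1, ?_⟩
    have h1 : M * |b| / π ≤ (⌈M * |b| / π⌉₊ : ℝ) := Nat.le_ceil _
    rw [div_le_iff₀ hπ] at h1
    push_cast
    nlinarith
  have hNπ : 0 ≤ (N : ℝ) * π := by positivity
  constructor
  -- ===== ν₁ =====
  · obtain ⟨m, k, hmN, hmk⟩ := approx_aux hirr (-(a / b / 2)) hδ'pos N
    have hcosu : 2 / A < Real.cos (2 * π * (a / b * m + k + a / b / 2)) := by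
      refine cosb _ ?_
      have heq : a / b * (m:ℝ) + k + a / b / 2 = a / b * m + k - -(a / b / 2) := by ring
      rw [heq]; exact hmk
    have key1 : Real.cos (a / b * (2 * (m:ℝ) + 1) * π)
        = Real.cos (2 * π * (a / b * m + k + a / b / 2)) := by
      have heq : a / b * (2 * (m:ℝ) + 1) * π
          = 2 * π * (a / b * m + k + a / b / 2) + (-k : ℤ) * (2 * π) := by
        push_cast; ring
      rw [heq, Real.cos_add_int_mul_two_pi]
    have hcosm' : ∀ m' : ℤ, (m' = m ∨ m' = -1 - m) →
        2 / A < Real.cos (a / b * (2 * (m':ℝ) + 1) * π) := by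
      rintro m' (rfl | rfl)
      · rw [key1]; exact hcosu
      · have heq : a / b * (2 * ((-1 - m : ℤ):ℝ) + 1) * π
            = -(a / b * (2 * (m:ℝ) + 1) * π) := by push_cast; ring
        rw [heq, Real.cos_neg, key1]; exact hcosu
    have hmabs : (N:ℤ) < |m| := by
      have h1 : ((N:ℤ):ℝ) < |((m:ℤ):ℝ)| := by push_cast; exact hmN
      rw [← Int.cast_abs] at h1; exact_mod_cast h1
    have habs_cases : (N:ℤ) + 1 ≤ m ∨ m ≤ -((N:ℤ) + 1) := by
      rcases le_or_gt 0 m with h | h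
      · left; rw [abs_of_nonneg h] at hmabs; omega
      · right; rw [abs_of_neg h] at hmabs; omega
    obtain ⟨m', hm'mem, hm'pos, hm'neg⟩ :
        ∃ m' : ℤ, (m' = m ∨ m' = -1 - m) ∧
          (0 < b → (N:ℤ) ≤ m') ∧ (b < 0 → m' ≤ -((N:ℤ) + 1)) := by
      rcases lt_or_gt_of_ne hb0 with hbneg | hbpos
      · refine ⟨min m (-1 - m), ?_, fun h => absurd h (not_lt.mpr hbneg.le), fun _ => ?_⟩
        · rcases le_total m (-1 - m) with h | h
          · left; exact min_eq_left h
          · right; exact min_eq_right h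
        · rcases habs_cases with h | h
          · exact le_trans (min_le_right _ _) (by omega)
          · exact le_trans (min_le_left _ _) (by omega)
      · refine ⟨max m (-1 - m), ?_, fun _ => ?_, fun h => absurd h (not_lt.mpr hbpos.le)⟩
        · rcases le_total (-1 - m) m with h | h
          · left; exact max_eq_left h
          · right; exact max_eq_right h
        · rcases habs_cases with h | h
          · exact le_trans (by omega) (le_max_left _ _)
          · exact le_trans (by omega : (N:ℤ) ≤ -1 - m) (le_max_right _ _)
    refine ⟨(2 * (m':ℝ) + 1) * π / b, ?_, ?_, hhalf2⟩
    · rcases lt_or_gt_of_ne hb0 with hbneg | hbpos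
      · have hm'le : (m':ℝ) ≤ -((N:ℝ) + 1) := by exact_mod_cast hm'neg hbneg
        rw [gt_iff_lt, lt_div_iff_of_neg hbneg]
        rw [abs_of_neg hbneg] at hNb
        nlinarith
      · have hm'ge : (N:ℝ) ≤ (m':ℝ) := by exact_mod_cast hm'pos hbpos
        rw [gt_iff_lt, lt_div_iff₀ hbpos]
        rw [abs_of_pos hbpos] at hNb
        nlinarith
    · have hbν : b * ((2 * (m':ℝ) + 1) * π / b) = (m':ℝ) * (2 * π) + π := by
        field_simp
      have haν : a * ((2 * (m':ℝ) + 1) * π / b) = a / b * (2 * (m':ℝ) + 1) * π := by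
        field_simp
      rw [hf, haν, hbν, Real.cos_int_mul_two_pi_add_pi, hhalf]
      have h5 := hcosm' m' hm'mem
      have h6 : A * (2 / A) < A * Real.cos (a / b * (2 * (m':ℝ) + 1) * π) :=
        mul_lt_mul_of_pos_left h5 hA0
      rw [hAdiv] at h6
      linarith
  -- ===== ν₂ =====
  · obtain ⟨m, k, hmN, hmk⟩ := approx_aux hirr (1 / 2 : ℝ) hδ'pos N
    have hcosu : 2 / A < Real.cos (2 * π * (a / b * m + k - 1 / 2)) := cosb _ hmk
    have key1 : Real.cos (a / b * (2 * (m:ℝ)) * π)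
        = -Real.cos (2 * π * (a / b * m + k - 1 / 2)) := by
      have heq : a / b * (2 * (m:ℝ)) * π
          = (2 * π * (a / b * m + k - 1 / 2) + π) + (-k : ℤ) * (2 * π) := by
        push_cast; ring
      rw [heq, Real.cos_add_int_mul_two_pi, Real.cos_add_pi]
    have hcosm' : ∀ m' : ℤ, (m' = m ∨ m' = -m) →
        Real.cos (a / b * (2 * (m':ℝ)) * π) < -(2 / A) := by
      rintro m' (rfl | rfl)
      · rw [key1]; linarith
      · have heq : a / b * (2 * ((-m : ℤ):ℝ)) * π = -(a / b * (2 * (m:ℝ)) * π) := by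
          push_cast; ring
        rw [heq, Real.cos_neg, key1]; linarith
    have hmabs : (N:ℤ) < |m| := by
      have h1 : ((N:ℤ):ℝ) < |((m:ℤ):ℝ)| := by push_cast; exact hmN
      rw [← Int.cast_abs] at h1; exact_mod_cast h1
    obtain ⟨m', hm'mem, hm'pos, hm'neg⟩ :
        ∃ m' : ℤ, (m' = m ∨ m' = -m) ∧
          (0 < b → (N:ℤ) < m') ∧ (b < 0 → m' < -(N:ℤ)) := by
      rcases lt_or_gt_of_ne hb0 with hbneg | hbpos
      · refine ⟨-|m|, ?_, fun h => absurd h (not_lt.mpr hbneg.le), fun _ => by omega⟩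
        rcases abs_choice m with h | h
        · right; rw [h]
        · left; rw [h, neg_neg]
      · refine ⟨|m|, ?_, fun _ => by omega, fun h => absurd h (not_lt.mpr hbpos.le)⟩
        rcases abs_choice m with h | h
        · left; exact h
        · right; exact h
    refine ⟨2 * (m':ℝ) * π / b, ?_, ?_, hhalf2'⟩
    · rcases lt_or_gt_of_ne hb0 with hbneg | hbpos
      · have hm'le : (m':ℝ) < -(N:ℝ) := by exact_mod_cast hm'neg hbneg
        rw [gt_iff_lt, lt_div_iff_of_neg hbneg]
        rw [abs_of_neg hbneg] at hNb
        linarith [mul_lt_mul_of_pos_right hm'le hπ, hNπ]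
      · have hm'ge : (N:ℝ) < (m':ℝ) := by exact_mod_cast hm'pos hbpos
        rw [gt_iff_lt, lt_div_iff₀ hbpos]
        rw [abs_of_pos hbpos] at hNb
        linarith [mul_le_mul_of_nonneg_right hm'ge.le hπ.le,
          mul_pos (lt_of_le_of_lt (Nat.cast_nonneg N) hm'ge) hπ]
    · have hbν : b * (2 * (m':ℝ) * π / b) = (m':ℝ) * (2 * π) := by
        field_simp
      have haν : a * (2 * (m':ℝ) * π / b) = a / b * (2 * (m':ℝ)) * π := by
        field_simp
      rw [hf, haν, hbν, Real.cos_int_mul_two_pi, hhalf]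
      have h5 := hcosm' m' hm'mem
      have h6 : A * Real.cos (a / b * (2 * (m':ℝ)) * π) < A * -(2 / A) :=
        mul_lt_mul_of_pos_left h5 hA0
      rw [mul_neg, hAdiv] at h6
      linarith
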